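/- Let γ > 0, T > 0, ρ > 0 with ρ(2γ+T) + sin(ρT) ≠ 0, and define φ(t) = (σ/γ)·(1 - 2 tan(ρT/2)(cos(ρt) + cos(ρ(T-t)))/(ρ(2γ+T) + sin(ρT))) for a constant σ. Then φ satisfies γφ(t) + ∫₀ᵀ cos(ρ|t-s|) φ(s) ds = σ for all t ∈ [0,T]. -/

import Mathlib

open Real

private lemma hd_sin (a b s : ℝ) :
    HasDerivAt (fun s : ℝ => Real.sin (a + b * s)) (b * Real.cos (a + b * s)) s := by
  have h1 : HasDerivAt (fun s : ℝ => a + b * s) b s := by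
    simpa using ((hasDerivAt_id s).const_mul b).const_add a
  exact ((Real.hasDerivAt_sin (a + b * s)).comp s h1).congr_deriv (mul_comm _ _)

set_option maxHeartbeats 1600000 in
/-- the explicit solution of the Fredholm equation for the trigonometric
kernel `G(t) = cos(ρ t)`. -/
theorem stmt8 (γ T ρ σ : ℝ) (hγ : 0 < γ) (hT : 0 < T) (hρ : 0 < ρ)
    (hcos : Real.cos (ρ * T / 2) ≠ 0)
    (hden : ρ * (2 * γ + T) + Real.sin (ρ * T) ≠ 0)
    (φ : ℝ → ℝ)
    (hφ : φ = fun t => σ / γ *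
      (1 - 2 * Real.tan (ρ * T / 2) * (Real.cos (ρ * t) + Real.cos (ρ * (T - t))) /
        (ρ * (2 * γ + T) + Real.sin (ρ * T)))) :
    ∀ t ∈ Set.Icc (0 : ℝ) T,
      γ * φ t + ∫ s in Set.Ioc 0 T, Real.cos (ρ * |t - s|) * φ s = σ := by
  subst hφ
  intro t ht
  set c : ℝ := 2 * Real.tan (ρ * T / 2) / (ρ * (2 * γ + T) + Real.sin (ρ * T)) with hc
  set F : ℝ → ℝ := fun s => σ / γ *
      ( -(Real.sin (ρ * t + (-ρ) * s)) / ρ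
        - c * ( Real.cos (ρ * t) * s / 2 - Real.sin (ρ * t + (-(2 * ρ)) * s) / (4 * ρ)
          + (Real.cos (ρ * t - ρ * T) * s / 2
             - Real.sin (ρ * t + ρ * T + (-(2 * ρ)) * s) / (4 * ρ)) ) ) with hF
  have habs : ∀ s : ℝ, Real.cos (ρ * |t - s|) = Real.cos (ρ * t - ρ * s) := by
    intro s
    rw [← Real.cos_abs (ρ * t - ρ * s)]
    congr 1
    rw [← mul_sub, abs_mul, abs_of_pos hρ]
  have hderiv : ∀ s : ℝ, HasDerivAt F
      (Real.cos (ρ * |t - s|) * (σ / γ *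
        (1 - 2 * Real.tan (ρ * T / 2) * (Real.cos (ρ * s) + Real.cos (ρ * (T - s))) /
          (ρ * (2 * γ + T) + Real.sin (ρ * T))))) s := by
    intro s
    have h1 := ((hd_sin (ρ * t) (-ρ) s).neg.div_const ρ)
    have h2 : HasDerivAt (fun s : ℝ => Real.cos (ρ * t) * s / 2) (Real.cos (ρ * t) / 2) s := by
      simpa using (((hasDerivAt_id s).const_mul (Real.cos (ρ * t))).div_const 2)
    have h3 := (hd_sin (ρ * t) (-(2 * ρ)) s).div_const (4 * ρ)
    have h4 : HasDerivAt (fun s : ℝ => Real.cos (ρ * t - ρ * T) * s / 2)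
        (Real.cos (ρ * t - ρ * T) / 2) s := by
      simpa using (((hasDerivAt_id s).const_mul (Real.cos (ρ * t - ρ * T))).div_const 2)
    have h5 := (hd_sin (ρ * t + ρ * T) (-(2 * ρ)) s).div_const (4 * ρ)
    have h5' : HasDerivAt (fun s : ℝ => Real.sin (ρ * t + ρ * T + (-(2 * ρ)) * s) / (4 * ρ))
        ((-(2 * ρ)) * Real.cos (ρ * t + ρ * T + (-(2 * ρ)) * s) / (4 * ρ)) s := by
      simpa [add_assoc] using h5
    have hd : HasDerivAt F
        (σ / γ * ( -((-ρ) * Real.cos (ρ * t + (-ρ) * s)) / ρ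
          - c * ( Real.cos (ρ * t) / 2
              - (-(2 * ρ)) * Real.cos (ρ * t + (-(2 * ρ)) * s) / (4 * ρ)
            + (Real.cos (ρ * t - ρ * T) / 2
              - (-(2 * ρ)) * Real.cos (ρ * t + ρ * T + (-(2 * ρ)) * s) / (4 * ρ)) ) )) s :=
      ((h1.sub (((h2.sub h3).add (h4.sub h5')).const_mul c)).const_mul (σ / γ))
    convert hd using 1
    rw [habs s]
    have hcc : 2 * Real.tan (ρ * T / 2) * (Real.cos (ρ * s) + Real.cos (ρ * (T - s))) /
        (ρ * (2 * γ + T) + Real.sin (ρ * T)) = c * (Real.cos (ρ * s) + Real.cos (ρ * (T - s))) := by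
      rw [hc]; ring
    rw [hcc]
    have e1 : ρ * t + (-ρ) * s = ρ * t - ρ * s := by ring
    have e2 : ρ * t + (-(2 * ρ)) * s = (ρ * t - ρ * s) - ρ * s := by ring
    have e3 : ρ * t + ρ * T + (-(2 * ρ)) * s = (ρ * t - ρ * s) + (ρ * T - ρ * s) := by ring
    have e4 : ρ * (T - s) = ρ * T - ρ * s := by ring
    rw [e1, e2, e3, e4, Real.cos_sub (ρ * t - ρ * s) (ρ * s),
      Real.cos_add (ρ * t - ρ * s) (ρ * T - ρ * s), Real.cos_sub (ρ * t) (ρ * s),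
      Real.cos_sub (ρ * T) (ρ * s), Real.sin_sub (ρ * T) (ρ * s),
      Real.sin_sub (ρ * t) (ρ * s), Real.cos_sub (ρ * t) (ρ * T)]
    have hpys : Real.sin (ρ * s) ^ 2 + Real.cos (ρ * s) ^ 2 = 1 := Real.sin_sq_add_cos_sq _
    field_simp
    linear_combination (-4 * σ * c * (Real.cos (ρ * t) * (1 + Real.cos (ρ * T)) + Real.sin (ρ * t) * Real.sin (ρ * T))) * hpys
  have hcont : Continuous fun s : ℝ => Real.cos (ρ * |t - s|) * (σ / γ *
      (1 - 2 * Real.tan (ρ * T / 2) * (Real.cos (ρ * s) + Real.cos (ρ * (T - s))) /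
        (ρ * (2 * γ + T) + Real.sin (ρ * T)))) := by
    fun_prop
  have key : (∫ s in Set.Ioc (0:ℝ) T, Real.cos (ρ * |t - s|) * (σ / γ *
      (1 - 2 * Real.tan (ρ * T / 2) * (Real.cos (ρ * s) + Real.cos (ρ * (T - s))) /
        (ρ * (2 * γ + T) + Real.sin (ρ * T))))) = F T - F 0 := by
    rw [← intervalIntegral.integral_of_le hT.le]
    exact intervalIntegral.integral_eq_sub_of_hasDerivAt (fun s _ => hderiv s)
      (hcont.intervalIntegrable 0 T)
  rw [key]
  simp only [hF]
  have a0 : Real.sin (ρ * T) = 2 * Real.sin (ρ * T / 2) * Real.cos (ρ * T / 2) := by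
    rw [← Real.sin_two_mul]; congr 1; ring
  have b1 : Real.cos (ρ * (T - t)) = (2 * Real.cos (ρ * T / 2) ^ 2 - 1) * Real.cos (ρ * t)
      + 2 * Real.sin (ρ * T / 2) * Real.cos (ρ * T / 2) * Real.sin (ρ * t) := by
    rw [show ρ * (T - t) = 2 * (ρ * T / 2) - ρ * t by ring, Real.cos_sub, Real.sin_two_mul,
      Real.cos_two_mul]
    try ring
  have b2 : Real.sin (ρ * t + -ρ * T) = Real.sin (ρ * t) * (2 * Real.cos (ρ * T / 2) ^ 2 - 1)
      - 2 * Real.sin (ρ * T / 2) * Real.cos (ρ * T / 2) * Real.cos (ρ * t) := by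
    rw [show ρ * t + -ρ * T = ρ * t - 2 * (ρ * T / 2) by ring, Real.sin_sub, Real.sin_two_mul,
      Real.cos_two_mul]
    try ring
  have b3 : Real.sin (ρ * t + -(2 * ρ) * T) =
      (Real.sin (ρ * t) * (2 * Real.cos (ρ * T / 2) ^ 2 - 1)
        - 2 * Real.sin (ρ * T / 2) * Real.cos (ρ * T / 2) * Real.cos (ρ * t))
        * (2 * Real.cos (ρ * T / 2) ^ 2 - 1)
      - (Real.cos (ρ * t) * (2 * Real.cos (ρ * T / 2) ^ 2 - 1)
        + 2 * Real.sin (ρ * T / 2) * Real.cos (ρ * T / 2) * Real.sin (ρ * t))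
        * (2 * Real.sin (ρ * T / 2) * Real.cos (ρ * T / 2)) := by
    rw [show ρ * t + -(2 * ρ) * T = (ρ * t - 2 * (ρ * T / 2)) - 2 * (ρ * T / 2) by ring]
    simp only [Real.sin_sub, Real.cos_sub, Real.sin_two_mul, Real.cos_two_mul]
    try ring
  have b4 : Real.cos (ρ * t - ρ * T) = Real.cos (ρ * t) * (2 * Real.cos (ρ * T / 2) ^ 2 - 1)
      + 2 * Real.sin (ρ * T / 2) * Real.cos (ρ * T / 2) * Real.sin (ρ * t) := by
    rw [show ρ * t - ρ * T = ρ * t - 2 * (ρ * T / 2) by ring, Real.cos_sub, Real.sin_two_mul,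
      Real.cos_two_mul]
    try ring
  have b5 : Real.sin (ρ * t + ρ * T + -(2 * ρ) * T) =
      Real.sin (ρ * t) * (2 * Real.cos (ρ * T / 2) ^ 2 - 1)
      - 2 * Real.sin (ρ * T / 2) * Real.cos (ρ * T / 2) * Real.cos (ρ * t) := by
    rw [show ρ * t + ρ * T + -(2 * ρ) * T = ρ * t - 2 * (ρ * T / 2) by ring, Real.sin_sub,
      Real.sin_two_mul, Real.cos_two_mul]
    try ring
  have b6 : Real.sin (ρ * t + -ρ * 0) = Real.sin (ρ * t) := by norm_num
  have b7 : Real.sin (ρ * t + -(2 * ρ) * 0) = Real.sin (ρ * t) := by norm_num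
  have b8 : Real.sin (ρ * t + ρ * T + -(2 * ρ) * 0) =
      Real.sin (ρ * t) * (2 * Real.cos (ρ * T / 2) ^ 2 - 1)
      + 2 * Real.sin (ρ * T / 2) * Real.cos (ρ * T / 2) * Real.cos (ρ * t) := by
    rw [show ρ * t + ρ * T + -(2 * ρ) * 0 = ρ * t + 2 * (ρ * T / 2) by ring, Real.sin_add,
      Real.sin_two_mul, Real.cos_two_mul]
    try ring
  have hden' : ρ * (2 * γ + T) + 2 * Real.sin (ρ * T / 2) * Real.cos (ρ * T / 2) ≠ 0 := by
    rw [← a0]; exact hden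
  have hpy : Real.sin (ρ * T / 2) ^ 2 + Real.cos (ρ * T / 2) ^ 2 = 1 := Real.sin_sq_add_cos_sq _
  rw [hc, Real.tan_eq_sin_div_cos, a0, b1, b2, b3, b4, b5, b6, b7, b8]
  have hden'' : ρ * (γ * 2 + T) + 2 * Real.sin (ρ * T / 2) * Real.cos (ρ * T / 2) ≠ 0 := by
    rw [mul_comm γ 2]; exact hden'
  field_simp [hden'']
  generalize Real.sin (ρ * T / 2) = S at hpy ⊢
  have hS2 : S ^ 2 = 1 - Real.cos (ρ * T / 2) ^ 2 := by linear_combination hpy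
  ring_nf
  simp only [show S ^ 3 = S ^ 2 * S ^ 1 by ring, show S ^ 4 = S ^ 2 * S ^ 2 by ring, show S ^ 5 = S ^ 2 * S ^ 3 by ring, show S ^ 6 = S ^ 2 * S ^ 4 by ring, show S ^ 7 = S ^ 2 * S ^ 5 by ring, show S ^ 8 = S ^ 2 * S ^ 6 by ring, show S ^ 9 = S ^ 2 * S ^ 7 by ring, show S ^ 10 = S ^ 2 * S ^ 8 by ring, show S ^ 11 = S ^ 2 * S ^ 9 by ring, hS2]
  ring
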